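/- (Theorem 3.3(i)) Suppose Assumption AC holds: there exist sos polynomials a_0, a_1,…,a_r, b_1,…,b_t and a real number R > 0 such that R − ‖[x]_d‖² = a_0 + a_1 f_1 + ··· + a_r f_r + b_1 h_1 + ··· + b_t h_t identically, with deg(a_i f_i) ≤ 2d and deg(b_j h_j) ≤ 2d for all i, j. If C ∩ H = ∅ (the split feasibility problem is infeasible), then there exists k_0 such that for all k ≥ k_0 the order-k moment relaxation is infeasible, i.e., there is no y ∈ ℝ^{ℕ^n_{2k}} with y_0 = 1 such that L_1^{(k)}[y] ⪰ 0, L_{f_i}^{(k)}[y] ⪰ 0 for i = 1,…,r, and L_{h_j}^{(k)}[y] ⪰ 0 for j = 1,…,t. -/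

import Mathlib

open MvPolynomial Finsupp

noncomputable section

/-- The total degree `|α|` of a multi-index `α ∈ ℕ^n`. -/
def mdeg {n : ℕ} (α : Fin n →₀ ℕ) : ℕ := ∑ i, α i

/-- `⌈m/2⌉` for a natural number `m`. -/
def halfCeil (m : ℕ) : ℕ := (m + 1) / 2

/-- The Riesz functional `R_y(f) = ∑_γ f_γ y_γ`. -/
def Riesz {n : ℕ} (y : (Fin n →₀ ℕ) → ℝ) (f : MvPolynomial (Fin n) ℝ) : ℝ :=
  ∑ γ ∈ f.support, f.coeff γ * y γ

/-- The `k`-th localizing matrix `L_f^{(k)}[y]`, indexed by multi-indices; its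
`(α,β)` entry is `∑_γ f_γ y_{α+β+γ}` when `|α|,|β| ≤ s := k - ⌈deg f / 2⌉` (and `0` otherwise). -/
def locMat {n : ℕ} (k : ℕ) (f : MvPolynomial (Fin n) ℝ) (y : (Fin n →₀ ℕ) → ℝ) :
    Matrix (Fin n →₀ ℕ) (Fin n →₀ ℕ) ℝ := fun α β =>
  if mdeg α ≤ k - halfCeil f.totalDegree ∧ mdeg β ≤ k - halfCeil f.totalDegree then
    ∑ γ ∈ f.support, f.coeff γ * y (α + β + γ)
  else 0

/-- Positive semidefiniteness of a (block-finitely supported) matrix indexed by multi-indices: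
symmetry together with nonnegativity of the quadratic form on all finitely supported vectors. -/
def IsPSD {n : ℕ} (M : Matrix (Fin n →₀ ℕ) (Fin n →₀ ℕ) ℝ) : Prop :=
  (∀ α β, M α β = M β α) ∧
  ∀ v : (Fin n →₀ ℕ) →₀ ℝ, 0 ≤ ∑ α ∈ v.support, ∑ β ∈ v.support, v α * M α β * v β

/-- The evaluation `u^α` of a monomial with multi-index `α` at a point `u`. -/
def monoEval {n : ℕ} (u : Fin n → ℝ) (α : Fin n →₀ ℕ) : ℝ := ∏ i, u i ^ α i

/-- The finite set of multi-indices `α ∈ ℕ^n` with `|α| ≤ D`. -/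
def degLE (n D : ℕ) : Finset (Fin n →₀ ℕ) :=
  (Finset.Iic (Finsupp.equivFunOnFinite.symm fun _ : Fin n => D)).filter fun α => mdeg α ≤ D

end

/-- A sum-of-squares (sos) polynomial. -/
def IsSos {n : ℕ} (σ : MvPolynomial (Fin n) ℝ) : Prop :=
  ∃ (L : ℕ) (p : Fin L → MvPolynomial (Fin n) ℝ), σ = ∑ l, p l ^ 2

/-- The polynomial `‖[x]_D‖² = ∑_{|β| ≤ D} x^{2β}`. -/
noncomputable def monVecSq (n D : ℕ) : MvPolynomial (Fin n) ℝ :=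
  ∑ β ∈ degLE n D, (MvPolynomial.monomial β (1 : ℝ)) ^ 2

noncomputable section
open MvPolynomial

namespace SosAux
variable {n : ℕ}

abbrev Poly (n : ℕ) := MvPolynomial (Fin n) ℝ

lemma isSos_zero : IsSos (0 : Poly n) := ⟨0, fun _ => 0, by simp⟩

lemma isSos_sq (p : Poly n) : IsSos (p ^ 2) := ⟨1, fun _ => p, by simp⟩

lemma isSos_one : IsSos (1 : Poly n) := by simpa using isSos_sq (1 : Poly n)

lemma isSos_add {p q : Poly n} (hp : IsSos p) (hq : IsSos q) : IsSos (p + q) := by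
  obtain ⟨L, u, rfl⟩ := hp
  obtain ⟨L', v, rfl⟩ := hq
  exact ⟨L + L', Fin.append u v, by rw [Fin.sum_univ_add]; simp⟩

lemma isSos_sum {κ : Type*} (s : Finset κ) (g : κ → Poly n)
    (h : ∀ x ∈ s, IsSos (g x)) : IsSos (∑ x ∈ s, g x) := by
  classical
  induction s using Finset.cons_induction with
  | empty => simpa using isSos_zero
  | cons a s ha ih =>
    rw [Finset.sum_cons]
    exact isSos_add (h a (Finset.mem_cons_self a s))
      (ih fun x hx => h x (Finset.mem_cons_of_mem hx))

lemma isSos_mul {p q : Poly n} (hp : IsSos p) (hq : IsSos q) : IsSos (p * q) := by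
  obtain ⟨L, u, rfl⟩ := hp
  obtain ⟨L', v, rfl⟩ := hq
  rw [Finset.sum_mul]
  refine isSos_sum _ _ fun l _ => ?_
  rw [Finset.mul_sum]
  refine isSos_sum _ _ fun m _ => ?_
  have : u l ^ 2 * v m ^ 2 = (u l * v m) ^ 2 := by ring
  rw [this]; exact isSos_sq _

lemma isSos_C {c : ℝ} (hc : 0 ≤ c) : IsSos (C c : Poly n) := by
  refine ⟨1, fun _ => C (Real.sqrt c), ?_⟩
  rw [Fin.sum_univ_one, sq, ← C_mul, Real.mul_self_sqrt hc]

end SosAux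
end
namespace SosAux
open MvPolynomial
noncomputable section
variable {n : ℕ}

/-- A quadratic module. -/
def IsQM (S : Set (Poly n)) : Prop :=
  (∀ p, IsSos p → p ∈ S) ∧ (∀ a ∈ S, ∀ b ∈ S, a + b ∈ S) ∧
    ∀ σ, IsSos σ → ∀ a ∈ S, σ * a ∈ S

/-- The quadratic module generated by the family `q`. -/
def QMod {ι : Type*} [Fintype ι] (q : ι → Poly n) : Set (Poly n) :=
  {p | ∃ (σ₀ : Poly n) (σ : ι → Poly n), IsSos σ₀ ∧ (∀ i, IsSos (σ i)) ∧ p = σ₀ + ∑ i, σ i * q i}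

lemma isQM_qmod {ι : Type*} [Fintype ι] (q : ι → Poly n) : IsQM (QMod q) := by
  refine ⟨fun p hp => ⟨p, fun _ => 0, hp, fun i => isSos_zero, by simp⟩, ?_, ?_⟩
  · rintro a ⟨σ₀, σ, h₀, hσ, rfl⟩ b ⟨τ₀, τ, k₀, kτ, rfl⟩
    refine ⟨σ₀ + τ₀, fun i => σ i + τ i, isSos_add h₀ k₀, fun i => isSos_add (hσ i) (kτ i), ?_⟩
    simp only []
    rw [Finset.sum_congr rfl (fun i (_ : i ∈ Finset.univ) =>
      (add_mul (σ i) (τ i) (q i) : (σ i + τ i) * q i = _)), Finset.sum_add_distrib]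
    ring
  · rintro σ hσ a ⟨τ₀, τ, k₀, kτ, rfl⟩
    refine ⟨σ * τ₀, fun i => σ * τ i, isSos_mul hσ k₀, fun i => isSos_mul hσ (kτ i), ?_⟩
    simp only []
    rw [mul_add, Finset.mul_sum]
    congr 1
    exact Finset.sum_congr rfl fun i _ => by ring

lemma mem_qmod {ι : Type*} [Fintype ι] [DecidableEq ι] (q : ι → Poly n) (i : ι) :
    q i ∈ QMod q := by
  refine ⟨0, fun j => if j = i then 1 else 0, isSos_zero,
    fun j => by by_cases hji : j = i <;> simp [hji, isSos_one, isSos_zero], ?_⟩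
  rw [zero_add]
  rw [Finset.sum_congr rfl (fun j _ => by
    show (if j = i then (1:Poly n) else 0) * q j = if j = i then q j else 0
    split <;> simp)]
  simp

lemma neg_const_not_mem {S : Set (Poly n)} (hQM : IsQM S) (h1 : (-1 : Poly n) ∉ S)
    {c : ℝ} (hc : c < 0) : C c ∉ S := by
  intro hmem
  have hinv : (0:ℝ) ≤ -c⁻¹ := by
    rw [neg_nonneg, inv_nonpos]; exact hc.le
  have := hQM.2.2 (C (-c⁻¹)) (isSos_C hinv) _ hmem
  rw [← map_mul, neg_mul, inv_mul_cancel₀ (ne_of_lt hc), map_neg, map_one] at this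
  exact h1 this

end
end SosAux
namespace SosAux
open MvPolynomial
noncomputable section
variable {n : ℕ}

/-- The functional associated to a quadratic module. -/
def phi (S : Set (Poly n)) (p : Poly n) : ℝ := sInf {l : ℝ | C l - p ∈ S}

section maximal
variable {S : Set (Poly n)} (hQM : IsQM S) (h1 : (-1 : Poly n) ∉ S)
  (hmax : ∀ T, IsQM T → (-1 : Poly n) ∉ T → S ⊆ T → T ⊆ S)
  (harch : ∀ p : Poly n, ∃ N : ℝ, 0 < N ∧ C N - p ∈ S ∧ C N + p ∈ S)

include hQM h1 hmax harch

/-- Key dichotomy for maximal archimedean quadratic modules. -/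
lemma mem_or_neg_mem (a : Poly n) : a ∈ S ∨ -a ∈ S := by
  by_contra hcon
  push_neg at hcon
  obtain ⟨ha, hna⟩ := hcon
  -- the extension S + σ·b
  have hext : ∀ b : Poly n, b ∉ S → ∃ s ∈ S, ∃ t, IsSos t ∧ (-1 : Poly n) = s + t * b := by
    intro b hb
    set T : Set (Poly n) := {x | ∃ s ∈ S, ∃ t, IsSos t ∧ x = s + t * b} with hT
    have hQMT : IsQM T := by
      refine ⟨fun p hp => ⟨p, hQM.1 p hp, 0, isSos_zero, by ring⟩, ?_, ?_⟩
      · rintro x ⟨s, hs, t, ht, rfl⟩ y ⟨s', hs', t', ht', rfl⟩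
        exact ⟨s + s', hQM.2.1 s hs s' hs', t + t', isSos_add ht ht', by ring⟩
      · rintro σ hσ x ⟨s, hs, t, ht, rfl⟩
        exact ⟨σ * s, hQM.2.2 σ hσ s hs, σ * t, isSos_mul hσ ht, by ring⟩
    have hbT : b ∈ T := ⟨0, hQM.1 0 isSos_zero, 1, isSos_one, by ring⟩
    have hST : S ⊆ T := fun x hx => ⟨x, hx, 0, isSos_zero, by ring⟩
    by_cases hm1 : (-1 : Poly n) ∈ T
    · obtain ⟨s, hs, t, ht, he⟩ := hm1
      exact ⟨s, hs, t, ht, he⟩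
    · exact absurd (hmax T hQMT hm1 hST hbT) hb
  obtain ⟨s₁, hs₁, t₁, ht₁, e₁⟩ := hext a ha
  obtain ⟨s₂, hs₂, t₂, ht₂, e₂⟩ := hext (-a) hna
  have key : t₁ + t₂ + t₁ * s₂ + t₂ * s₁ = 0 := by
    linear_combination (-t₂) * e₁ + (-t₁) * e₂
  obtain ⟨N, hN, hNa, hNa'⟩ := harch a
  have m₁ : t₁ * (C N + a) ∈ S := hQM.2.2 t₁ ht₁ _ hNa'
  have m₂ : t₂ * (C N - a) ∈ S := hQM.2.2 t₂ ht₂ _ hNa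
  have m₃ : C N * (t₁ * s₂) ∈ S := hQM.2.2 (C N) (isSos_C hN.le) _ (hQM.2.2 t₁ ht₁ _ hs₂)
  have m₄ : C N * (t₂ * s₁) ∈ S := hQM.2.2 (C N) (isSos_C hN.le) _ (hQM.2.2 t₂ ht₂ _ hs₁)
  have mX : t₁ * (C N + a) + s₁ + (t₂ * (C N - a) + s₂) + C N * (t₁ * s₂) + C N * (t₂ * s₁) ∈ S :=
    hQM.2.1 _ (hQM.2.1 _ (hQM.2.1 _ (hQM.2.1 _ m₁ _ hs₁) _ (hQM.2.1 _ m₂ _ hs₂)) _ m₃) _ m₄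
  have hXeq : t₁ * (C N + a) + s₁ + (t₂ * (C N - a) + s₂) + C N * (t₁ * s₂) + C N * (t₂ * s₁)
      = (-2 : Poly n) := by
    linear_combination -e₁ - e₂ + C N * key
  rw [hXeq] at mX
  have : (-1 : Poly n) ∈ S := by
    have h2 := hQM.2.2 (C (1/2 : ℝ)) (isSos_C (by norm_num)) _ mX
    have : (C (1/2 : ℝ) : Poly n) * (-2) = -1 := by
      rw [show ((-2 : Poly n)) = C (-2 : ℝ) by rw [map_neg, map_ofNat], ← map_mul]
      norm_num
    rwa [this] at h2
  exact h1 this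

omit hmax in
lemma phi_le_of_mem {p : Poly n} {μ : ℝ} (h : C μ - p ∈ S) : phi S p ≤ μ := by
  unfold phi
  refine csInf_le ?_ (show μ ∈ {l : ℝ | C l - p ∈ S} from h)
  obtain ⟨N, _, _, hN2⟩ := harch p
  refine ⟨-N, fun l hl => ?_⟩
  by_contra hcon
  push_neg at hcon
  have : C (l + N) ∈ S := by
    have := hQM.2.1 _ hl _ hN2
    rwa [show C l - p + (C N + p) = (C (l + N) : Poly n) by rw [map_add]; ring] at this
  exact neg_const_not_mem hQM h1 (by linarith) this

omit hmax in
lemma le_phi_of_mem {p : Poly n} {μ : ℝ} (h : p - C μ ∈ S) : μ ≤ phi S p := by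
  by_contra hcon
  push_neg at hcon
  obtain ⟨l, hl, hlμ⟩ := exists_lt_of_csInf_lt (by obtain ⟨N, _, hN1, _⟩ := harch p; exact ⟨N, hN1⟩) hcon
  have : C (l - μ) ∈ S := by
    have := hQM.2.1 _ hl _ h
    rwa [show C l - p + (p - C μ) = (C (l - μ) : Poly n) by rw [map_sub]; ring] at this
  exact neg_const_not_mem hQM h1 (by linarith) this

omit hmax in
lemma phi_add_eps_mem (p : Poly n) {ε : ℝ} (hε : 0 < ε) : C (phi S p + ε) - p ∈ S := by
  have hlt : sInf {l : ℝ | C l - p ∈ S} < phi S p + ε := by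
    have : phi S p < phi S p + ε := by linarith
    exact this
  obtain ⟨l, hl, hlt⟩ := exists_lt_of_csInf_lt
    (by obtain ⟨N, _, hN1, _⟩ := harch p; exact ⟨N, hN1⟩) hlt
  have := hQM.2.1 _ (hQM.1 _ (isSos_C (c := phi S p + ε - l) (by linarith))) _ hl
  rwa [show C (phi S p + ε - l) + (C l - p) = (C (phi S p + ε) : Poly n) - p by
    rw [map_sub, map_add]; ring] at this

lemma phi_sub_eps_mem (p : Poly n) {ε : ℝ} (hε : 0 < ε) : p - C (phi S p - ε) ∈ S := by
  have hnot : C (phi S p - ε) - p ∉ S := by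
    intro hmem
    have := phi_le_of_mem hQM h1 harch hmem
    linarith
  rcases mem_or_neg_mem hQM h1 hmax harch (C (phi S p - ε) - p) with h | h
  · exact absurd h hnot
  · rwa [neg_sub] at h

omit hmax in
lemma phi_C (c : ℝ) : phi S (C c) = c := by
  refine le_antisymm (phi_le_of_mem hQM h1 harch ?_) (le_phi_of_mem hQM h1 harch ?_) <;>
    · rw [sub_self]; exact hQM.1 0 isSos_zero

omit hmax in
lemma phi_nonneg_of_mem {v : Poly n} (hv : v ∈ S) : 0 ≤ phi S v :=
  le_phi_of_mem hQM h1 harch (by rwa [map_zero, sub_zero])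

end maximal
end
end SosAux
namespace SosAux
open MvPolynomial
noncomputable section
variable {n : ℕ}
variable {S : Set (Poly n)} (hQM : IsQM S) (h1 : (-1 : Poly n) ∉ S)
  (hmax : ∀ T, IsQM T → (-1 : Poly n) ∉ T → S ⊆ T → T ⊆ S)
  (harch : ∀ p : Poly n, ∃ N : ℝ, 0 < N ∧ C N - p ∈ S ∧ C N + p ∈ S)

set_option linter.unusedSectionVars false

include hQM h1 hmax harch

lemma phi_add (p r : Poly n) : phi S (p + r) = phi S p + phi S r := by
  refine le_antisymm (le_of_forall_pos_le_add fun ε hε => ?_) ?_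
  · have h₁ := phi_add_eps_mem hQM h1 harch p (half_pos hε)
    have h₂ := phi_add_eps_mem hQM h1 harch r (half_pos hε)
    have hm := hQM.2.1 _ h₁ _ h₂
    have hC : (C ε : Poly n) = C (ε/2) + C (ε/2) := by rw [← map_add]; congr 1; ring
    rw [show C (phi S p + ε/2) - p + (C (phi S r + ε/2) - r)
        = (C (phi S p + phi S r + ε) : Poly n) - (p + r) by
          simp only [map_add, map_sub]; linear_combination -hC]
      at hm
    exact phi_le_of_mem hQM h1 harch hm
  · refine le_of_forall_pos_le_add fun ε hε => ?_
    have h₁ := phi_sub_eps_mem hQM h1 hmax harch p (half_pos hε)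
    have h₂ := phi_sub_eps_mem hQM h1 hmax harch r (half_pos hε)
    have hm := hQM.2.1 _ h₁ _ h₂
    have hC : (C ε : Poly n) = C (ε/2) + C (ε/2) := by rw [← map_add]; congr 1; ring
    rw [show p - C (phi S p - ε/2) + (r - C (phi S r - ε/2))
        = (p + r) - (C (phi S p + phi S r - ε) : Poly n) by
          simp only [map_add, map_sub]; linear_combination -hC] at hm
    have := le_phi_of_mem hQM h1 harch hm
    linarith

lemma phi_neg (p : Poly n) : phi S (-p) = - phi S p := by
  have := phi_add hQM h1 hmax harch p (-p)
  rw [add_neg_cancel, show phi S 0 = 0 by simpa using phi_C hQM h1 harch (0:ℝ)] at this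
  linarith

lemma phi_const_mul (c : ℝ) (p : Poly n) : phi S (C c * p) = c * phi S p := by
  -- first the case 0 ≤ c
  have base : ∀ (c : ℝ), 0 ≤ c → ∀ p : Poly n, phi S (C c * p) = c * phi S p := by
    intro c hc p
    rcases eq_or_lt_of_le hc with hc0 | hcpos
    · rw [← hc0]; simp [show phi S 0 = 0 by simpa using phi_C hQM h1 harch (0:ℝ)]
    refine le_antisymm (le_of_forall_pos_le_add fun ε hε => ?_)
      (le_of_forall_pos_le_add fun ε hε => ?_)
    · have h₁ := phi_add_eps_mem hQM h1 harch p (div_pos hε hcpos)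
      have hm := hQM.2.2 _ (isSos_C hc) _ h₁
      rw [show C c * (C (phi S p + ε/c) - p) = (C (c * (phi S p + ε/c)) : Poly n) - C c * p by
        rw [map_mul]; ring] at hm
      have := phi_le_of_mem hQM h1 harch hm
      rw [mul_add, mul_div_cancel₀ _ (ne_of_gt hcpos)] at this
      linarith
    · have h₁ := phi_sub_eps_mem hQM h1 hmax harch p (div_pos hε hcpos)
      have hm := hQM.2.2 _ (isSos_C hc) _ h₁
      rw [show C c * (p - C (phi S p - ε/c)) = C c * p - (C (c * (phi S p - ε/c)) : Poly n) by
        rw [map_mul]; ring] at hm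
      have := le_phi_of_mem hQM h1 harch hm
      rw [mul_sub, mul_div_cancel₀ _ (ne_of_gt hcpos)] at this
      linarith
  rcases le_or_gt 0 c with hc | hc
  · exact base c hc p
  · have : C c * p = -(C (-c) * p) := by rw [map_neg]; ring
    rw [this, phi_neg hQM h1 hmax harch, base (-c) (by linarith) p]
    ring

lemma phi_sq (p : Poly n) : phi S (p ^ 2) = (phi S p) ^ 2 := by
  set c := phi S p with hc
  set q := p - C c with hqdef
  have hq0 : phi S q = 0 := by
    rw [hqdef, sub_eq_add_neg, ← map_neg,
      phi_add hQM h1 hmax harch, phi_C hQM h1 harch]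
    simp [hc]
  -- upper bound on phi (q^2)
  have hqsq : phi S (q ^ 2) ≤ 0 := by
    have key : ∀ ε : ℝ, 0 < ε → ε ≤ 1 → phi S (q ^ 2) ≤ ε := by
      intro ε hε hε1
      have hm1 : C ε - q ∈ S := by
        have := phi_add_eps_mem hQM h1 harch q hε
        rwa [hq0, zero_add] at this
      have hm2 : C ε + q ∈ S := by
        have h' := phi_sub_eps_mem hQM h1 hmax harch q hε
        rw [hq0, zero_sub] at h'
        rwa [show q - C (-ε) = C ε + q by rw [map_neg]; ring] at h'
      have hu : (q + 1)^2 * (C ε - q) + (1 - q)^2 * (C ε + q) ∈ S :=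
        hQM.2.1 _ (hQM.2.2 _ (isSos_sq (q+1)) _ hm1) _ (hQM.2.2 _ (isSos_sq (1-q)) _ hm2)
      have hueq : (q + 1)^2 * (C ε - q) + (1 - q)^2 * (C ε + q)
          = (C (2*ε) * q ^ 2 + C (-4:ℝ) * q ^ 2) + C (2*ε) := by
        rw [show (C (2*ε) : Poly n) = 2 * C ε by rw [map_mul, map_ofNat],
          show (C (-4:ℝ) : Poly n) = -4 by rw [map_neg, map_ofNat]]
        ring
      rw [hueq] at hu
      have hphiu := phi_nonneg_of_mem hQM h1 harch hu
      rw [phi_add hQM h1 hmax harch, phi_add hQM h1 hmax harch,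
        phi_const_mul hQM h1 hmax harch, phi_const_mul hQM h1 hmax harch,
        phi_C hQM h1 harch] at hphiu
      -- (2ε)t - 4t + 2ε ≥ 0 with t := phi (q^2)
      nlinarith [hphiu]
    by_contra hcon
    push_neg at hcon
    have := key (min 1 (phi S (q^2) / 2)) (by positivity) (min_le_left _ _)
    have h2 : min 1 (phi S (q^2) / 2) ≤ phi S (q^2) / 2 := min_le_right _ _
    linarith
  have hqge : 0 ≤ phi S (q ^ 2) := phi_nonneg_of_mem hQM h1 harch (hQM.1 _ (isSos_sq q))
  have hq2 : phi S (q ^ 2) = 0 := le_antisymm hqsq hqge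
  have hexp : p ^ 2 = q ^ 2 + (C (2*c) * q + C (c^2)) := by
    rw [hqdef, show (C (2*c) : Poly n) = 2 * C c by rw [map_mul, map_ofNat],
      map_pow]
    ring
  rw [hexp, phi_add hQM h1 hmax harch, phi_add hQM h1 hmax harch,
    phi_const_mul hQM h1 hmax harch, phi_C hQM h1 harch, hq2, hq0]
  ring

lemma phi_mul (p r : Poly n) : phi S (p * r) = phi S p * phi S r := by
  have h4 : (C (4:ℝ) : Poly n) * (p * r) = (p + r)^2 - (p - r)^2 := by
    rw [show (C (4:ℝ) : Poly n) = 4 by rw [map_ofNat]]; ring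
  have hsub : phi S (p - r) = phi S p - phi S r := by
    rw [sub_eq_add_neg, phi_add hQM h1 hmax harch, phi_neg hQM h1 hmax harch]; ring
  have hadd : phi S (p + r) = phi S p + phi S r := phi_add hQM h1 hmax harch p r
  have h4' := phi_const_mul hQM h1 hmax harch 4 (p * r)
  rw [h4, sub_eq_add_neg, phi_add hQM h1 hmax harch, phi_neg hQM h1 hmax harch,
    phi_sq hQM h1 hmax harch, phi_sq hQM h1 hmax harch, hadd, hsub] at h4'
  nlinarith [h4']

lemma phi_eq_eval (x : Fin n → ℝ) (hx : x = fun i => phi S (X i)) (p : Poly n) :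
    phi S p = MvPolynomial.eval x p := by
  induction p using MvPolynomial.induction_on with
  | C a => rw [phi_C hQM h1 harch, eval_C]
  | add p r hp hr => rw [phi_add hQM h1 hmax harch, eval_add, hp, hr]
  | mul_X p i hp => rw [phi_mul hQM h1 hmax harch, eval_mul, eval_X, hp, hx]

end
end SosAux
namespace SosAux
open MvPolynomial
noncomputable section
variable {n : ℕ}

theorem putinar {ι : Type} [Fintype ι] [DecidableEq ι] (q : ι → Poly n)
    (hX : ∀ i : Fin n, ∃ N : ℝ, 0 ≤ N ∧ C N - X i ^ 2 ∈ QMod q)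
    (hempty : ∀ x : Fin n → ℝ, ∃ i, MvPolynomial.eval x (q i) < 0) :
    (-1 : Poly n) ∈ QMod q := by
  by_contra hm1
  have hQM0 := isQM_qmod q
  -- boundedness of all squares
  have bnd : ∀ p : Poly n, ∃ N : ℝ, 0 ≤ N ∧ C N - p ^ 2 ∈ QMod q := by
    intro p
    induction p using MvPolynomial.induction_on with
    | C a =>
      refine ⟨a^2, sq_nonneg a, ?_⟩
      rw [show C (a^2) - (C a)^2 = (0 : Poly n) by rw [map_pow]; ring]
      exact hQM0.1 0 isSos_zero
    | add p r hp hr =>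
      obtain ⟨Np, hNp, hp⟩ := hp
      obtain ⟨Nr, hNr, hr⟩ := hr
      refine ⟨2*Np + 2*Nr, by linarith, ?_⟩
      rw [show C (2*Np + 2*Nr) - (p + r)^2
          = C 2 * (C Np - p^2) + C 2 * (C Nr - r^2) + (p - r)^2 by
            simp only [map_add, map_mul, map_ofNat]; ring]
      exact hQM0.2.1 _ (hQM0.2.1 _ (hQM0.2.2 _ (isSos_C (by norm_num)) _ hp) _
        (hQM0.2.2 _ (isSos_C (by norm_num)) _ hr)) _ (hQM0.1 _ (isSos_sq _))
    | mul_X p i hp =>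
      obtain ⟨Np, hNp, hp⟩ := hp
      obtain ⟨Ni, hNi, hi⟩ := hX i
      refine ⟨Np * Ni, mul_nonneg hNp hNi, ?_⟩
      rw [show C (Np * Ni) - (p * X i)^2
          = C Ni * (C Np - p^2) + p^2 * (C Ni - X i^2) by simp only [map_mul]; ring]
      exact hQM0.2.1 _ (hQM0.2.2 _ (isSos_C hNi) _ hp) _ (hQM0.2.2 _ (isSos_sq p) _ hi)
  -- archimedean property of QMod q
  have arch0 : ∀ p : Poly n, ∃ N : ℝ, 0 < N ∧ C N - p ∈ QMod q ∧ C N + p ∈ QMod q := by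
    intro p
    obtain ⟨N₀, hN₀, hb⟩ := bnd p
    refine ⟨(N₀ + 1)/2, by linarith, ?_, ?_⟩
    · have hm := hQM0.2.2 _ (isSos_C (show (0:ℝ) ≤ 1/2 by norm_num)) _
        (hQM0.2.1 _ hb _ (hQM0.1 _ (isSos_sq (p - 1))))
      rwa [show C (1/2 : ℝ) * (C N₀ - p^2 + (p - 1)^2) = (C ((N₀+1)/2) : Poly n) - p by
        have h₁ : (C ((N₀+1)/2) : Poly n) = C (1/2 : ℝ) * C (N₀+1) := by
          rw [← map_mul]; congr 1; ring
        have h₂ : (C (1/2:ℝ) : Poly n) * 2 = 1 := by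
          rw [show (2 : Poly n) = C (2:ℝ) by rw [map_ofNat], ← map_mul]; norm_num
        rw [h₁, map_add, map_one]
        linear_combination (-p) * h₂] at hm
    · have hm := hQM0.2.2 _ (isSos_C (show (0:ℝ) ≤ 1/2 by norm_num)) _
        (hQM0.2.1 _ hb _ (hQM0.1 _ (isSos_sq (p + 1))))
      rwa [show C (1/2 : ℝ) * (C N₀ - p^2 + (p + 1)^2) = (C ((N₀+1)/2) : Poly n) + p by
        have h₁ : (C ((N₀+1)/2) : Poly n) = C (1/2 : ℝ) * C (N₀+1) := by
          rw [← map_mul]; congr 1; ring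
        have h₂ : (C (1/2:ℝ) : Poly n) * 2 = 1 := by
          rw [show (2 : Poly n) = C (2:ℝ) by rw [map_ofNat], ← map_mul]; norm_num
        rw [h₁, map_add, map_one]
        linear_combination p * h₂] at hm
  -- Zorn's lemma
  set 𝒮 : Set (Set (Poly n)) := {T | IsQM T ∧ (-1 : Poly n) ∉ T} with h𝒮
  have hchain : ∀ c ⊆ 𝒮, IsChain (· ⊆ ·) c → c.Nonempty →
      ∃ ub ∈ 𝒮, ∀ s ∈ c, s ⊆ ub := by
    intro c hc hch hne
    refine ⟨⋃₀ c, ⟨⟨?_, ?_, ?_⟩, ?_⟩, fun s hs => Set.subset_sUnion_of_mem hs⟩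
    · obtain ⟨t, ht⟩ := hne
      exact fun p hp => ⟨t, ht, (hc ht).1.1 p hp⟩
    · rintro a ⟨s₁, hs₁, ha⟩ b ⟨s₂, hs₂, hb⟩
      rcases hch.total hs₁ hs₂ with h | h
      · exact ⟨s₂, hs₂, (hc hs₂).1.2.1 a (h ha) b hb⟩
      · exact ⟨s₁, hs₁, (hc hs₁).1.2.1 a ha b (h hb)⟩
    · rintro σ hσ a ⟨s₁, hs₁, ha⟩
      exact ⟨s₁, hs₁, (hc hs₁).1.2.2 σ hσ a ha⟩
    · rintro ⟨s₁, hs₁, hmem⟩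
      exact (hc hs₁).2 hmem
  obtain ⟨S, hsub, hSmax⟩ := zorn_subset_nonempty 𝒮 hchain (QMod q) ⟨hQM0, hm1⟩
  have hQM : IsQM S := hSmax.1.1
  have h1S : (-1 : Poly n) ∉ S := hSmax.1.2
  have hmax : ∀ T, IsQM T → (-1 : Poly n) ∉ T → S ⊆ T → T ⊆ S :=
    fun T hT h1T hsubT => hSmax.2 ⟨hT, h1T⟩ hsubT
  have harch : ∀ p : Poly n, ∃ N : ℝ, 0 < N ∧ C N - p ∈ S ∧ C N + p ∈ S := by
    intro p
    obtain ⟨N, h0, ha, hb⟩ := arch0 p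
    exact ⟨N, h0, hsub ha, hsub hb⟩
  have hx := phi_eq_eval hQM h1S hmax harch (fun i => phi S (X i)) rfl
  obtain ⟨i, hi⟩ := hempty (fun i => phi S (X i))
  have hnn : 0 ≤ phi S (q i) := phi_nonneg_of_mem hQM h1S harch (hsub (mem_qmod q i))
  rw [hx (q i)] at hnn
  linarith

end
end SosAux
namespace SosAux
open MvPolynomial
noncomputable section
variable {n : ℕ}

lemma riesz_superset (y : (Fin n →₀ ℕ) → ℝ) {g : Poly n} {s : Finset (Fin n →₀ ℕ)}
    (h : g.support ⊆ s) : Riesz y g = ∑ γ ∈ s, MvPolynomial.coeff γ g * y γ :=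
  Finset.sum_subset h fun x _ hx => by
    rw [MvPolynomial.notMem_support_iff.1 hx, zero_mul]

lemma riesz_zero (y : (Fin n →₀ ℕ) → ℝ) : Riesz y 0 = 0 := by
  unfold Riesz; simp

lemma riesz_add (y : (Fin n →₀ ℕ) → ℝ) (g g' : Poly n) :
    Riesz y (g + g') = Riesz y g + Riesz y g' := by
  classical
  rw [riesz_superset y (s := g.support ∪ g'.support) (MvPolynomial.support_add),
    riesz_superset y (s := g.support ∪ g'.support) Finset.subset_union_left,
    riesz_superset y (s := g.support ∪ g'.support) Finset.subset_union_right,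
    ← Finset.sum_add_distrib]
  exact Finset.sum_congr rfl fun γ _ => by rw [MvPolynomial.coeff_add]; ring

lemma riesz_sum (y : (Fin n →₀ ℕ) → ℝ) {κ : Type*} (s : Finset κ) (g : κ → Poly n) :
    Riesz y (∑ x ∈ s, g x) = ∑ x ∈ s, Riesz y (g x) := by
  classical
  induction s using Finset.cons_induction with
  | empty => simp [riesz_zero]
  | cons a s ha ih => rw [Finset.sum_cons, Finset.sum_cons, riesz_add, ih]

lemma riesz_monomial (y : (Fin n →₀ ℕ) → ℝ) (α : Fin n →₀ ℕ) (c : ℝ) :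
    Riesz y (MvPolynomial.monomial α c) = c * y α := by
  classical
  unfold Riesz
  by_cases hc : c = 0
  · simp [hc]
  · rw [MvPolynomial.support_monomial, if_neg hc, Finset.sum_singleton,
      MvPolynomial.coeff_monomial, if_pos rfl]

lemma mdeg_le_totalDegree {p : Poly n} {α : Fin n →₀ ℕ} (h : α ∈ p.support) :
    mdeg α ≤ p.totalDegree := by
  have h2 : mdeg α = α.sum fun _ e => e := by
    rw [Finsupp.sum_fintype _ _ (fun _ => rfl)]; rfl
  rw [h2]
  exact MvPolynomial.le_totalDegree h

/-- Key lemma: nonnegativity of the Riesz functional on `p² q` from PSDness of the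
localizing matrix. -/
lemma riesz_sq_mul_nonneg (k : ℕ) (q p : Poly n) (y : (Fin n →₀ ℕ) → ℝ)
    (hpsd : IsPSD (locMat k q y))
    (hdeg : ∀ α ∈ p.support, mdeg α ≤ k - halfCeil q.totalDegree) :
    0 ≤ Riesz y (p ^ 2 * q) := by
  classical
  set v : (Fin n →₀ ℕ) →₀ ℝ := Finsupp.onFinset p.support (fun α => MvPolynomial.coeff α p)
    (fun a ha => MvPolynomial.mem_support_iff.2 ha) with hvdef
  have hva : ∀ α, v α = MvPolynomial.coeff α p := fun α => Finsupp.onFinset_apply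
  have hvs : v.support = p.support := by
    apply subset_antisymm Finsupp.support_onFinset_subset
    intro a ha
    exact Finsupp.mem_support_iff.2 (by rw [hva]; exact MvPolynomial.mem_support_iff.1 ha)
  have hform := hpsd.2 v
  rw [hvs] at hform
  have hM : ∀ α ∈ p.support, ∀ β ∈ p.support, locMat k q y α β
      = ∑ γ ∈ q.support, MvPolynomial.coeff γ q * y (α + β + γ) := by
    intro α hα β hβ
    unfold locMat
    rw [if_pos ⟨hdeg α hα, hdeg β hβ⟩]
  have hpq : p ^ 2 * q = ∑ α ∈ p.support, ∑ β ∈ p.support, ∑ γ ∈ q.support,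
      MvPolynomial.monomial (α + β + γ)
        (MvPolynomial.coeff α p * MvPolynomial.coeff β p * MvPolynomial.coeff γ q) := by
    conv_lhs => rw [sq, p.as_sum, q.as_sum]
    rw [Finset.sum_mul_sum]
    simp only [Finset.sum_mul, Finset.mul_sum, MvPolynomial.monomial_mul]
    rw [Finset.sum_comm]
    exact Finset.sum_congr rfl fun α _ => Finset.sum_comm
  have hexp : Riesz y (p ^ 2 * q) = ∑ α ∈ p.support, ∑ β ∈ p.support,
      v α * locMat k q y α β * v β := by
    rw [hpq, riesz_sum]
    refine Finset.sum_congr rfl fun α hα => ?_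
    rw [riesz_sum]
    refine Finset.sum_congr rfl fun β hβ => ?_
    rw [riesz_sum, hM α hα β hβ, hva, hva, Finset.mul_sum, Finset.sum_mul]
    exact Finset.sum_congr rfl fun γ _ => by rw [riesz_monomial]; ring
  rw [hexp]
  exact hform

lemma eq_C_of_totalDegree_zero {p : Poly n} (h : p.totalDegree = 0) :
    p = C (MvPolynomial.coeff 0 p) := by
  classical
  rw [MvPolynomial.totalDegree_eq_zero_iff] at h
  have hsub : p.support ⊆ {0} := fun m hm =>
    Finset.mem_singleton.2 (Finsupp.ext fun x => h m hm x)
  by_cases h0 : (0 : Fin n →₀ ℕ) ∈ p.support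
  · have hs : p.support = {0} := subset_antisymm hsub (Finset.singleton_subset_iff.2 h0)
    conv_lhs => rw [p.as_sum]
    rw [hs, Finset.sum_singleton, MvPolynomial.C_apply]
  · have hc : MvPolynomial.coeff 0 p = 0 := MvPolynomial.notMem_support_iff.1 h0
    have hs : p.support = ∅ := by
      rcases Finset.subset_singleton_iff.1 hsub with h' | h'
      · exact h'
      · exact absurd (h' ▸ Finset.mem_singleton_self 0) h0
    have hp0 : p = 0 := MvPolynomial.support_eq_empty.1 hs
    rw [hp0]; simp

end
end SosAux
namespace SosAux
open MvPolynomial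
noncomputable section
variable {n : ℕ}

lemma single_mem_degLE {d : ℕ} (hd : 1 ≤ d) (i : Fin n) :
    Finsupp.single i 1 ∈ degLE n d := by
  classical
  refine Finset.mem_filter.2 ⟨Finset.mem_Iic.2 ?_, ?_⟩
  · intro j
    have hj : ((Finsupp.equivFunOnFinite.symm fun _ : Fin n => d) : Fin n →₀ ℕ) j = d := rfl
    rw [hj, Finsupp.single_apply]
    by_cases hji : i = j
    · simpa [hji] using hd
    · simp [hji]
  · show mdeg _ ≤ d
    unfold mdeg
    rw [Finset.sum_eq_single i (fun b _ hb => by simp [Finsupp.single_apply, (Ne.symm hb)])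
      (fun hni => absurd (Finset.mem_univ i) hni)]
    simpa using hd

lemma monVecSq_sub_sq_isSos {d : ℕ} (hd : 1 ≤ d) (i : Fin n) :
    IsSos (monVecSq n d - X i ^ 2) := by
  classical
  have hmem := single_mem_degLE (n := n) hd i
  have hXi : (X i : Poly n) = MvPolynomial.monomial (Finsupp.single i 1) (1:ℝ) := by
    rw [← MvPolynomial.X_pow_eq_monomial, pow_one]
  have hsplit : monVecSq n d
      = (MvPolynomial.monomial (Finsupp.single i 1) (1:ℝ))^2
        + ∑ β ∈ (degLE n d).erase (Finsupp.single i 1), (MvPolynomial.monomial β (1:ℝ))^2 :=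
    (Finset.add_sum_erase _ _ hmem).symm
  rw [hsplit, ← hXi, add_sub_cancel_left]
  exact isSos_sum _ _ fun β _ => isSos_sq _

end
end SosAux

open SosAux MvPolynomial in
/-- **Theorem 3.3(i).** Under Assumption AC
(`R − ‖[x]_d‖² = a_0 + ∑ a_i f_i + ∑ b_j h_j` with sos multipliers and degree bounds),
if `C ∩ H = ∅`, then the order-`k` moment relaxation is infeasible for all `k` big enough. -/
theorem relaxation_infeasible_of_infeasible {n m r t : ℕ}
    (f : Fin r → MvPolynomial (Fin n) ℝ) (g : Fin t → MvPolynomial (Fin m) ℝ)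
    (A : Matrix (Fin m) (Fin n) ℝ)
    (h : Fin t → MvPolynomial (Fin n) ℝ)
    (hh : ∀ j, h j = MvPolynomial.aeval
      (fun i : Fin m => ∑ l : Fin n, MvPolynomial.C (A i l) * MvPolynomial.X l) (g j))
    (C H : Set (Fin n → ℝ))
    (hC : C = {x | ∀ i, 0 ≤ MvPolynomial.eval x (f i)})
    (hH : H = {x | ∀ j, 0 ≤ MvPolynomial.eval x (h j)})
    (d : ℕ)
    (hd : d = max (Finset.univ.sup fun i => halfCeil (f i).totalDegree)
                  (Finset.univ.sup fun j => halfCeil (h j).totalDegree))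
    -- Assumption AC:
    (Rv : ℝ) (hR : 0 < Rv)
    (a₀ : MvPolynomial (Fin n) ℝ) (a : Fin r → MvPolynomial (Fin n) ℝ)
    (b : Fin t → MvPolynomial (Fin n) ℝ)
    (ha₀ : IsSos a₀) (ha : ∀ i, IsSos (a i)) (hb : ∀ j, IsSos (b j))
    (hda : ∀ i, (a i * f i).totalDegree ≤ 2 * d)
    (hdb : ∀ j, (b j * h j).totalDegree ≤ 2 * d)
    (hcert : MvPolynomial.C Rv - monVecSq n d = a₀ + ∑ i, a i * f i + ∑ j, b j * h j)
    -- infeasibility of the SFP: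
    (hinfeas : C ∩ H = ∅) :
    ∃ k₀ : ℕ, ∀ k, k₀ ≤ k →
      ¬ ∃ y : (Fin n →₀ ℕ) → ℝ, y 0 = 1 ∧
          IsPSD (locMat k (1 : MvPolynomial (Fin n) ℝ) y) ∧
          (∀ i, IsPSD (locMat k (f i) y)) ∧
          (∀ j, IsPSD (locMat k (h j) y)) := by
  classical
  set q : Fin r ⊕ Fin t → Poly n := Sum.elim f h with hq
  have hQM0 := isQM_qmod q
  -- the AC certificate lives in the quadratic module
  have hcertQ : MvPolynomial.C Rv - monVecSq n d ∈ QMod q := by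
    refine ⟨a₀, Sum.elim a b, ha₀, by rintro (i | j); exacts [ha i, hb j], ?_⟩
    rw [hcert, Fintype.sum_sum_type]
    simp only [Sum.elim_inl, Sum.elim_inr, hq]
    ring
  -- every point violates some constraint
  have hviol : ∀ x : Fin n → ℝ, ∃ i, MvPolynomial.eval x (q i) < 0 := by
    intro x
    have hx : x ∉ C ∩ H := by rw [hinfeas]; exact Set.notMem_empty x
    rw [hC, hH] at hx
    by_contra hcon
    push_neg at hcon
    exact hx ⟨fun i => hcon (Sum.inl i), fun j => hcon (Sum.inr j)⟩
  -- Step 1: -1 belongs to the quadratic module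
  have hneg : (-1 : Poly n) ∈ QMod q := by
    rcases Nat.eq_zero_or_pos d with hd0 | hd1
    · -- degenerate case: all constraints are constants
      obtain ⟨i, hi⟩ := hviol (fun _ => 0)
      have hdeg0 : (q i).totalDegree = 0 := by
        have h1 : halfCeil ((q i).totalDegree) ≤ d := by
          rcases i with i | j
          · have hA : halfCeil ((f i).totalDegree)
                ≤ Finset.univ.sup (fun i => halfCeil (f i).totalDegree) :=
              Finset.le_sup (f := fun i => halfCeil (f i).totalDegree) (Finset.mem_univ i)
            rw [hd]
            exact le_trans hA (le_max_left _ _)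
          · have hA : halfCeil ((h j).totalDegree)
                ≤ Finset.univ.sup (fun j => halfCeil (h j).totalDegree) :=
              Finset.le_sup (f := fun j => halfCeil (h j).totalDegree) (Finset.mem_univ j)
            rw [hd]
            exact le_trans hA (le_max_right _ _)
        rw [hd0] at h1
        have : (q i).totalDegree + 1 < 2 := ((Nat.div_eq_zero_iff).1
          (Nat.le_zero.1 h1)).resolve_left (by norm_num)
        omega
      have hqC : q i = MvPolynomial.C (MvPolynomial.coeff 0 (q i)) :=
        eq_C_of_totalDegree_zero hdeg0
      have hcval : MvPolynomial.coeff 0 (q i) < 0 := by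
        rw [hqC, eval_C] at hi; exact hi
      set c := MvPolynomial.coeff 0 (q i) with hcdef
      have hinv : (0:ℝ) ≤ -c⁻¹ := by rw [neg_nonneg, inv_nonpos]; exact hcval.le
      have hmem := hQM0.2.2 (MvPolynomial.C (-c⁻¹)) (isSos_C hinv) _ (mem_qmod q i)
      rwa [show MvPolynomial.C (-c⁻¹) * q i = (-1 : Poly n) by
        rw [hqC, ← map_mul, neg_mul, inv_mul_cancel₀ (ne_of_lt hcval), map_neg, map_one]] at hmem
    · -- main case: use the Putinar-type certificate
      apply putinar q _ hviol
      intro i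
      refine ⟨Rv, hR.le, ?_⟩
      have hsos := monVecSq_sub_sq_isSos (n := n) hd1 i
      have hmem := hQM0.2.1 _ hcertQ _ (hQM0.1 _ hsos)
      rwa [show MvPolynomial.C Rv - monVecSq n d + (monVecSq n d - X i ^ 2)
        = MvPolynomial.C Rv - X i ^ 2 by ring] at hmem
  -- Step 2: unpack the certificate and bound degrees
  obtain ⟨σ₀, σ, hσ₀, hσ, hcert2⟩ := hneg
  obtain ⟨L₀, P₀, hP₀⟩ := hσ₀
  choose L P hP using hσ
  set k₀ : ℕ := max (Finset.univ.sup fun l => (P₀ l).totalDegree)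
    (Finset.univ.sup fun i : Fin r ⊕ Fin t =>
      halfCeil ((q i).totalDegree) + Finset.univ.sup fun l => (P i l).totalDegree) with hk₀
  refine ⟨k₀, fun k hk => ?_⟩
  rintro ⟨y, hy0, hpsd1, hpsdf, hpsdh⟩
  have hqpsd : ∀ i, IsPSD (locMat k (q i) y) := by
    rintro (i | j); exacts [hpsdf i, hpsdh j]
  -- Riesz functional of -1
  have hL : Riesz y (-1 : Poly n) = -1 := by
    rw [show (-1 : Poly n) = MvPolynomial.monomial 0 (-1 : ℝ) by
      rw [← MvPolynomial.C_apply, map_neg, map_one], riesz_monomial, hy0]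
    ring
  -- Riesz functional of the right-hand side is nonnegative
  have hR0 : 0 ≤ Riesz y (σ₀ + ∑ i, σ i * q i) := by
    rw [riesz_add, riesz_sum]
    apply add_nonneg
    · rw [hP₀, riesz_sum]
      apply Finset.sum_nonneg
      intro l _
      have hdeg : ∀ α ∈ (P₀ l).support,
          mdeg α ≤ k - halfCeil ((1 : Poly n).totalDegree) := by
        intro α hα
        have h1 : mdeg α ≤ (P₀ l).totalDegree := mdeg_le_totalDegree hα
        have h2 : (P₀ l).totalDegree ≤ k₀ := by
          have hA : (P₀ l).totalDegree ≤ Finset.univ.sup (fun l => (P₀ l).totalDegree) :=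
            Finset.le_sup (f := fun l => (P₀ l).totalDegree) (Finset.mem_univ l)
          rw [hk₀]
          exact le_trans hA (le_max_left _ _)
        have h3 : halfCeil ((1 : Poly n).totalDegree) = 0 := by
          rw [MvPolynomial.totalDegree_one]; rfl
        omega
      have := riesz_sq_mul_nonneg k 1 (P₀ l) y hpsd1 hdeg
      rwa [mul_one] at this
    · apply Finset.sum_nonneg
      intro i _
      rw [hP i, Finset.sum_mul, riesz_sum]
      apply Finset.sum_nonneg
      intro l _
      refine riesz_sq_mul_nonneg k _ (P i l) y (hqpsd i) ?_
      intro α hα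
      have h1 : mdeg α ≤ (P i l).totalDegree := mdeg_le_totalDegree hα
      have h2 : halfCeil ((q i).totalDegree) + (P i l).totalDegree ≤ k₀ := by
        have hA : (P i l).totalDegree ≤ Finset.univ.sup (fun l => (P i l).totalDegree) :=
          Finset.le_sup (f := fun l => (P i l).totalDegree) (Finset.mem_univ l)
        have hB : halfCeil ((q i).totalDegree) + Finset.univ.sup (fun l => (P i l).totalDegree)
            ≤ Finset.univ.sup (fun i : Fin r ⊕ Fin t =>
              halfCeil ((q i).totalDegree) + Finset.univ.sup fun l => (P i l).totalDegree) :=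
          Finset.le_sup (f := fun i : Fin r ⊕ Fin t =>
            halfCeil ((q i).totalDegree) + Finset.univ.sup fun l => (P i l).totalDegree)
            (Finset.mem_univ i)
        rw [hk₀]
        exact le_trans (le_trans (Nat.add_le_add_left hA _) hB) (le_max_right _ _)
      omega
  rw [← hcert2, hL] at hR0
  linarith
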